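/- Let S(θ) = -1/(1+r_f) + μαθ/(λ(a+bθ)·(1+r_f)) (target sensitivity with P(θ)(1+r_f) = a+bθ) and G(θ) = -ψ/(1+r_f)·(1 + A(γ-κ)θ(1+r_f)/(a+bθ)) (path sensitivity). If μα·a > 0 and ψA(γ-κ)a > 0, then S'(θ) > 0 and G'(θ) < 0 for all θ ≥ 0, so the model generates the asymmetric pattern: ESG improves (makes less negative) target-surprise sensitivity and worsens (makes more negative) path-surprise sensitivity simultaneously. -/
import Mathlib


/-- Asymmetric pattern: the target-surprise sensitivity
`S(θ) = -1/(1+r_f) + μαθ/(λ(a+bθ)(1+r_f))` has strictly positive derivative and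
the path-surprise sensitivity
`G(θ) = -ψ/(1+r_f)·(1 + A(γ-κ)θ(1+r_f)/(a+bθ))` has strictly negative
derivative for all `θ ≥ 0`. -/
theorem asymmetric_pattern_derivatives
    (a b rf mu alpha lam psi A gamma kappa : ℝ)
    (ha : 0 < a) (hb : 0 ≤ b) (hrf : -1 < rf)
    (hmu : 0 < mu) (halpha : 0 < alpha) (hlam : 0 < lam)
    (hpsi : 0 < psi) (hA : 0 < A) (hgk : kappa < gamma) :
    ∀ theta : ℝ, 0 ≤ theta →
      0 < deriv (fun t : ℝ =>
            -(1 / (1 + rf)) + mu * alpha * t / (lam * (a + b * t) * (1 + rf))) theta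
      ∧ deriv (fun t : ℝ =>
            -(psi / (1 + rf)) * (1 + A * (gamma - kappa) * t * (1 + rf) / (a + b * t)))
          theta < 0 := by
  intro θ hθ
  have h1rf : 0 < 1 + rf := by linarith
  have hden : 0 < a + b * θ := by nlinarith
  have hdne : a + b * θ ≠ 0 := ne_of_gt hden
  have h1 : HasDerivAt (fun t : ℝ => a + b * t) b θ := by
    simpa using ((hasDerivAt_id θ).const_mul b).const_add a
  -- first function
  have hN : HasDerivAt (fun t : ℝ => mu * alpha * t) (mu * alpha) θ := by
    simpa using (hasDerivAt_id θ).const_mul (mu * alpha)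
  have hD : HasDerivAt (fun t : ℝ => lam * (a + b * t) * (1 + rf))
      (lam * b * (1 + rf)) θ := (h1.const_mul lam).mul_const (1 + rf)
  have hDne : lam * (a + b * θ) * (1 + rf) ≠ 0 := by positivity
  have hf1 : HasDerivAt (fun t : ℝ =>
      -(1 / (1 + rf)) + mu * alpha * t / (lam * (a + b * t) * (1 + rf)))
      ((mu * alpha * (lam * (a + b * θ) * (1 + rf))
        - mu * alpha * θ * (lam * b * (1 + rf)))
        / (lam * (a + b * θ) * (1 + rf)) ^ 2) θ :=
    (hN.div hD hDne).const_add _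
  -- second function
  have hE : HasDerivAt (fun t : ℝ => A * (gamma - kappa) * t * (1 + rf))
      (A * (gamma - kappa) * (1 + rf)) θ := by
    simpa using (((hasDerivAt_id θ).const_mul (A * (gamma - kappa))).mul_const (1 + rf))
  have hq : HasDerivAt (fun t : ℝ =>
      1 + A * (gamma - kappa) * t * (1 + rf) / (a + b * t))
      ((A * (gamma - kappa) * (1 + rf) * (a + b * θ)
        - A * (gamma - kappa) * θ * (1 + rf) * b) / (a + b * θ) ^ 2) θ :=
    (hE.div h1 hdne).const_add 1
  have hf2 : HasDerivAt (fun t : ℝ =>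
      -(psi / (1 + rf)) * (1 + A * (gamma - kappa) * t * (1 + rf) / (a + b * t)))
      (-(psi / (1 + rf)) *
        ((A * (gamma - kappa) * (1 + rf) * (a + b * θ)
          - A * (gamma - kappa) * θ * (1 + rf) * b) / (a + b * θ) ^ 2)) θ :=
    hq.const_mul _
  constructor
  · rw [hf1.deriv]
    apply div_pos
    · have : mu * alpha * (lam * (a + b * θ) * (1 + rf))
          - mu * alpha * θ * (lam * b * (1 + rf))
          = mu * alpha * lam * a * (1 + rf) := by ring
      rw [this]; positivity
    · positivity
  · rw [hf2.deriv]
    have hnum : A * (gamma - kappa) * (1 + rf) * (a + b * θ)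
        - A * (gamma - kappa) * θ * (1 + rf) * b
        = A * (gamma - kappa) * (1 + rf) * a := by ring
    rw [hnum]
    have hgk' : 0 < gamma - kappa := by linarith
    have hpos : 0 < A * (gamma - kappa) * (1 + rf) * a / (a + b * θ) ^ 2 := by positivity
    have hneg : -(psi / (1 + rf)) < 0 := by
      have : 0 < psi / (1 + rf) := by positivity
      linarith
    exact mul_neg_of_neg_of_pos hneg hpos
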